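/- The Legendre polynomial P_k satisfies the Sturm–Liouville equation d/dx((1-x²) dP_k/dx) = -k(k+1) P_k on ℝ. -/
import Mathlib


open Polynomial

/-- The `k`-th Legendre polynomial, via the Rodrigues formula
`P_k = (1/(2^k k!)) d^k/dx^k (x² - 1)^k`; this normalization gives `P_k(1) = 1`. -/
noncomputable def legendre (k : ℕ) : Polynomial ℝ :=
  ((2 ^ k * k.factorial : ℝ)⁻¹) • derivative^[k] ((X ^ 2 - 1) ^ k)

private lemma derX2 : derivative ((X:ℝ[X])^2 - 1) = 2 * X := by
  simp only [derivative_sub, derivative_one, derivative_X_pow, sub_zero, Nat.cast_ofNat,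
    map_ofNat]
  norm_num

private lemma lemA (k : ℕ) :
    ((X:ℝ[X])^2 - 1) * derivative ((X^2-1)^k) = (2*k : ℝ[X]) * (X * (X^2-1)^k) := by
  cases k with
  | zero => simp
  | succ n =>
    rw [derivative_pow, derX2, Nat.add_sub_cancel, pow_succ' (X^2-1 : ℝ[X]) n]
    simp only [map_add, map_one, C_eq_natCast]
    push_cast
    ring

private lemma lemT (p : ℝ[X]) : ∀ n : ℕ,
    derivative^[n+1] (X * p) = X * derivative^[n+1] p + ((n:ℝ[X])+1) * derivative^[n] p := by
  intro n
  induction n with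
  | zero => simp [derivative_mul]; ring
  | succ n ih =>
    rw [Function.iterate_succ_apply', ih]
    simp only [derivative_add, derivative_mul, derivative_X, derivative_natCast,
      derivative_one, derivative_ofNat, Function.iterate_succ_apply']
    push_cast
    ring

private lemma lemS (p : ℝ[X]) : ∀ n : ℕ,
    derivative^[n+1] ((X^2-1) * derivative p) =
      (X^2-1) * derivative^[n+2] p
      + (2*((n:ℝ[X])+1)) * (X * derivative^[n+1] p)
      + (((n:ℝ[X])+1)*(n:ℝ[X])) * derivative^[n] p := by
  intro n
  induction n with
  | zero =>
    simp only [Function.iterate_one, Function.iterate_succ_apply', Function.iterate_zero,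
      id_eq, derivative_mul, derX2]
    push_cast
    ring
  | succ n ih =>
    rw [Function.iterate_succ_apply', ih]
    simp only [derivative_add, derivative_mul, derivative_X, derivative_natCast,
      derivative_one, derivative_ofNat, derivative_sub, derivative_X_pow,
      Nat.cast_ofNat, map_ofNat, pow_one, Function.iterate_succ_apply']
    push_cast
    ring

private lemma key (k : ℕ) :
    ((X:ℝ[X])^2-1) * derivative^[k+2] ((X^2-1)^k)
      + 2 * (X * derivative^[k+1] ((X^2-1)^k))
      = ((k:ℝ[X])*((k:ℝ[X])+1)) * derivative^[k] ((X^2-1)^k) := by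
  have h := congrArg (derivative^[k+1]) (lemA k)
  rw [lemS ((X^2-1)^k) k] at h
  rw [show ((2*(k:ℝ[X])) * (X * (X^2-1)^k)) = (C (2*(k:ℝ)) * (X * (X^2-1)^k)) by
    simp only [map_mul, map_ofNat, C_eq_natCast]] at h
  rw [iterate_derivative_C_mul, lemT ((X^2-1)^k) k] at h
  simp only [map_mul, map_ofNat, C_eq_natCast] at h
  linear_combination h

/-- The Legendre polynomial `P_k` satisfies the Sturm–Liouville equation
`((1 - x²) P_k')' = -k(k+1) P_k`. -/
theorem legendre_sturm_liouville (k : ℕ) :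
    derivative ((1 - X ^ 2) * derivative (legendre k)) =
      (-(k * (k + 1) : ℝ)) • legendre k := by
  unfold legendre
  have h := key k
  simp only [Function.iterate_succ_apply'] at h
  simp only [smul_eq_C_mul, map_neg, map_mul, map_add, map_one, C_eq_natCast,
    derivative_mul, derivative_sub, derivative_one, derivative_X_pow, derivative_C,
    Nat.cast_ofNat, map_ofNat, pow_one, zero_sub, zero_mul, mul_zero, zero_add, add_zero]
  linear_combination (-(C ((2 ^ k * (k.factorial:ℝ))⁻¹))) * h
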